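/- arXiv:2510.14477 — 10 statements merged into one kernel-verified Lean document; each statement's English description precedes it below -/
import Mathlib

section
/- Let R be a ring and M a right R-module that is endoartinian. If N is a direct summand of M (i.e., there exists a submodule L of M with M the internal direct sum of N and L), then N is endoartinian. -/
/-- A module `M` over a ring `S` is *endoartinian* if every descending chain of images of
module endomorphisms of `M` stabilizes.  (A right `R`-module is treated as a module over
`Rᵐᵒᵖ`.) -/
def IsEndoartinian (S M : Type*) [Ring S] [AddCommGroup M] [Module S M] : Prop :=
  ∀ f : ℕ → M →ₗ[S] M,
    (∀ n, LinearMap.range (f (n + 1)) ≤ LinearMap.range (f n)) →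
    ∃ n, ∀ k, n ≤ k → LinearMap.range (f k) = LinearMap.range (f n)

/-- A direct summand of an endoartinian right `R`-module is endoartinian. -/
theorem directSummand_isEndoartinian (R M : Type*) [Ring R] [AddCommGroup M]
    [Module Rᵐᵒᵖ M] (hM : IsEndoartinian Rᵐᵒᵖ M) (N : Submodule Rᵐᵒᵖ M)
    (hN : ∃ L : Submodule Rᵐᵒᵖ M, N ⊓ L = ⊥ ∧ N ⊔ L = ⊤) :
    IsEndoartinian Rᵐᵒᵖ N := by
  obtain ⟨L, hdisj, hsup⟩ := hN
  have hcompl : IsCompl N L := ⟨disjoint_iff.mpr hdisj, codisjoint_iff.mpr hsup⟩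
  set π : M →ₗ[Rᵐᵒᵖ] N := Submodule.linearProjOfIsCompl N L hcompl with hπ
  have hπsurj : Function.Surjective π := fun n =>
    ⟨(n : M), Submodule.linearProjOfIsCompl_apply_left hcompl n⟩
  intro f hf
  set g : ℕ → M →ₗ[Rᵐᵒᵖ] M := fun n => N.subtype ∘ₗ (f n) ∘ₗ π with hg
  have hrange : ∀ n, LinearMap.range (g n) = (LinearMap.range (f n)).map N.subtype := by
    intro n
    rw [hg]
    simp only [LinearMap.range_comp, LinearMap.range_eq_top.mpr hπsurj, Submodule.map_top]
  have hgdesc : ∀ n, LinearMap.range (g (n + 1)) ≤ LinearMap.range (g n) := by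
    intro n
    rw [hrange, hrange]
    exact Submodule.map_mono (hf n)
  obtain ⟨n, hn⟩ := hM g hgdesc
  refine ⟨n, fun k hk => ?_⟩
  have := hn k hk
  rw [hrange, hrange] at this
  exact Submodule.map_injective_of_injective N.injective_subtype this
end

section
/- Let R be a ring and M a right R-module that is endonoetherian. If N is a direct summand of M (i.e., there exists a submodule L of M with M the internal direct sum of N and L), then N is endonoetherian. -/
/-- A module `M` over a ring `S` is *endonoetherian* if every ascending chain of kernels of
module endomorphisms of `M` stabilizes.  (A right `R`-module is treated as a module over
`Rᵐᵒᵖ`.) -/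
def IsEndonoetherian (S M : Type*) [Ring S] [AddCommGroup M] [Module S M] : Prop :=
  ∀ f : ℕ → M →ₗ[S] M,
    (∀ n, LinearMap.ker (f n) ≤ LinearMap.ker (f (n + 1))) →
    ∃ n, ∀ k, n ≤ k → LinearMap.ker (f k) = LinearMap.ker (f n)

/-- A direct summand of an endonoetherian right `R`-module is endonoetherian. -/
theorem directSummand_isEndonoetherian (R M : Type*) [Ring R] [AddCommGroup M]
    [Module Rᵐᵒᵖ M] (hM : IsEndonoetherian Rᵐᵒᵖ M) (N : Submodule Rᵐᵒᵖ M)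
    (hN : ∃ L : Submodule Rᵐᵒᵖ M, N ⊓ L = ⊥ ∧ N ⊔ L = ⊤) :
    IsEndonoetherian Rᵐᵒᵖ N := by
  obtain ⟨L, hinf, hsup⟩ := hN
  have hcompl : IsCompl N L :=
    ⟨disjoint_iff.mpr hinf, codisjoint_iff.mpr hsup⟩
  set π : M →ₗ[Rᵐᵒᵖ] N := Submodule.linearProjOfIsCompl N L hcompl with hπ
  intro f hf
  set g : ℕ → M →ₗ[Rᵐᵒᵖ] M := fun n => N.subtype ∘ₗ f n ∘ₗ π with hg
  have hker : ∀ n x, x ∈ LinearMap.ker (g n) ↔ π x ∈ LinearMap.ker (f n) := by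
    intro n x
    simp only [hg, LinearMap.mem_ker, LinearMap.comp_apply, Submodule.subtype_apply,
      Submodule.coe_eq_zero]
  obtain ⟨n, hn⟩ := hM g (fun n x hx => by
    rw [hker] at hx ⊢; exact hf n hx)
  refine ⟨n, fun k hk => ?_⟩
  ext x
  have h1 : (x : M) ∈ LinearMap.ker (g k) ↔ (x : M) ∈ LinearMap.ker (g n) := by
    rw [hn k hk]
  have hπx : π (x : M) = x := Submodule.linearProjOfIsCompl_apply_left hcompl x
  rw [hker, hker, hπx] at h1
  simpa using h1
end

section
/- Let R be a ring and M a right R-module that is both endoartinian and endonoetherian. Let (f_n)_{n≥1} be a sequence of R-module endomorphisms of M satisfying f_i ∘ f_j = f_{i+j} for all i, j ≥ 1. Then there exists n ≥ 1 such that ker(f_n) ∩ im(f_n) = 0. -/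
/-- If `M` is both endoartinian and endonoetherian and `(f n)` is a sequence of
endomorphisms with `f i ∘ f j = f (i + j)` for all `i, j ≥ 1`, then for some `n ≥ 1`
we have `ker (f n) ⊓ range (f n) = ⊥`. -/
theorem exists_ker_inf_range_eq_bot (R M : Type*) [Ring R] [AddCommGroup M]
    [Module Rᵐᵒᵖ M] (hart : IsEndoartinian Rᵐᵒᵖ M) (hnoe : IsEndonoetherian Rᵐᵒᵖ M)
    (f : ℕ → M →ₗ[Rᵐᵒᵖ] M)
    (hf : ∀ i j : ℕ, 1 ≤ i → 1 ≤ j → (f i).comp (f j) = f (i + j)) :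
    ∃ n : ℕ, 1 ≤ n ∧ LinearMap.ker (f n) ⊓ LinearMap.range (f n) = ⊥ := by
  obtain ⟨N, hN⟩ := hnoe (fun n => f (n + 1)) (fun n => by
    intro x hx
    have h := hf 1 (n + 1) le_rfl (Nat.le_add_left 1 n)
    have : f (n + 1 + 1) x = 0 := by
      rw [show n + 1 + 1 = 1 + (n + 1) by omega, ← h]
      simp only [LinearMap.comp_apply, LinearMap.mem_ker.mp hx, map_zero]
    exact LinearMap.mem_ker.mpr this)
  refine ⟨N + 1, Nat.le_add_left 1 N, ?_⟩
  rw [eq_bot_iff]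
  rintro x ⟨hker, y, rfl⟩
  have hcomp := hf (N + 1) (N + 1) (Nat.le_add_left 1 N) (Nat.le_add_left 1 N)
  have hy : f (N + 1 + (N + 1)) y = 0 := by
    rw [← hcomp]; exact hker
  have hk : LinearMap.ker (f (N + N + 1 + 1)) = LinearMap.ker (f (N + 1)) :=
    hN (N + N + 1) (by omega)
  have hy' : y ∈ LinearMap.ker (f (N + 1)) := by
    rw [← hk]
    exact LinearMap.mem_ker.mpr (by rw [show N + N + 1 + 1 = N + 1 + (N + 1) by omega]; exact hy)
  simpa using LinearMap.mem_ker.mp hy'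
end

section
/- (Fitting-type decomposition) Let R be a ring and M a right R-module that is both endoartinian and endonoetherian. Let (f_n)_{n∈ℕ} be a sequence of R-module endomorphisms of M satisfying f_i ∘ f_j = f_{i+j} for all i, j ∈ ℕ (with n ≥ 1). Then there exists n ∈ ℕ such that M is the internal direct sum of ker(f_n) and im(f_n), i.e., ker(f_n) ∩ im(f_n) = 0 and ker(f_n) + im(f_n) = M. -/
/-- **Fitting-type decomposition.** If `M` is both endoartinian and endonoetherian and
`(f n)` is a sequence of endomorphisms with `f i ∘ f j = f (i + j)` for all `i, j ≥ 1`,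
then for some `n ≥ 1` the module `M` is the internal direct sum of `ker (f n)` and
`range (f n)`. -/
theorem exists_fitting_decomposition (R M : Type*) [Ring R] [AddCommGroup M]
    [Module Rᵐᵒᵖ M] (hart : IsEndoartinian Rᵐᵒᵖ M) (hnoe : IsEndonoetherian Rᵐᵒᵖ M)
    (f : ℕ → M →ₗ[Rᵐᵒᵖ] M)
    (hf : ∀ i j : ℕ, 1 ≤ i → 1 ≤ j → (f i).comp (f j) = f (i + j)) :
    ∃ n : ℕ, 1 ≤ n ∧ LinearMap.ker (f n) ⊓ LinearMap.range (f n) = ⊥ ∧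
      LinearMap.ker (f n) ⊔ LinearMap.range (f n) = ⊤ := by

  set g : ℕ → M →ₗ[Rᵐᵒᵖ] M := fun n => f (n + 1) with hg
  obtain ⟨a, ha⟩ := hart g (fun n => by
    have h := hf (n + 1) 1 (by omega) (by omega)
    simp only [hg]
    have : f (n + 1 + 1) = (f (n + 1)).comp (f 1) := h.symm
    rw [this]
    exact LinearMap.range_comp_le_range _ _)
  obtain ⟨b, hb⟩ := hnoe g (fun n => by
    have h := hf 1 (n + 1) (by omega) (by omega)
    simp only [hg]
    have : f (n + 1 + 1) = (f 1).comp (f (n + 1)) := by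
      rw [h]; ring_nf
    rw [this]
    exact LinearMap.ker_le_ker_comp _ _)
  set c := max a b with hc
  have hr : LinearMap.range (f (2 * (c + 1))) = LinearMap.range (f (c + 1)) := by
    have h1 := ha (2 * c + 1) (by omega)
    have h2 := ha c (by omega)
    simp only [hg] at h1 h2
    have : 2 * c + 1 + 1 = 2 * (c + 1) := by ring
    rw [this] at h1
    rw [h1, h2]
  have hk : LinearMap.ker (f (2 * (c + 1))) = LinearMap.ker (f (c + 1)) := by
    have h1 := hb (2 * c + 1) (by omega)
    have h2 := hb c (by omega)
    simp only [hg] at h1 h2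
    have : 2 * c + 1 + 1 = 2 * (c + 1) := by ring
    rw [this] at h1
    rw [h1, h2]
  have hcomp : ∀ x : M, f (2 * (c + 1)) x = f (c + 1) (f (c + 1) x) := by
    intro x
    have h := hf (c + 1) (c + 1) (by omega) (by omega)
    have : (2 : ℕ) * (c + 1) = (c + 1) + (c + 1) := by ring
    rw [this, ← h]; rfl
  refine ⟨c + 1, by omega, ?_, ?_⟩
  · rw [eq_bot_iff]
    rintro x ⟨hxk, y, rfl⟩
    have : y ∈ LinearMap.ker (f (2 * (c + 1))) := by
      rw [LinearMap.mem_ker, hcomp]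
      exact hxk
    rw [hk, LinearMap.mem_ker] at this
    simp [this]
  · rw [eq_top_iff]
    intro x _
    have : f (c + 1) x ∈ LinearMap.range (f (2 * (c + 1))) := by
      rw [hr]; exact ⟨x, rfl⟩
    obtain ⟨z, hz⟩ := this
    rw [hcomp] at hz
    have hmem : x - f (c + 1) z ∈ LinearMap.ker (f (c + 1)) := by
      rw [LinearMap.mem_ker, map_sub, hz, sub_self]
    have : x = (x - f (c + 1) z) + f (c + 1) z := by abel
    rw [this]
    exact Submodule.add_mem_sup hmem ⟨z, rfl⟩
end

section
/- Let R be a ring and M an endonoetherian right R-module. Then M satisfies the ascending chain condition on direct summands: for every ascending chain M_1 ⊆ M_2 ⊆ ⋯ of submodules of M in which each M_i is a direct summand of M, there exists n such that M_k = M_n for all k ≥ n. -/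
/-! A direct summand `N` of `M` is the kernel of the projection of `M` onto a complement of `N`,
so an ascending chain of direct summands is an ascending chain of kernels of endomorphisms. -/

theorem Submodule.exists_ker_eq_of_isCompl {S M : Type*} [Ring S] [AddCommGroup M] [Module S M]
    {N L : Submodule S M} (h : IsCompl N L) : ∃ f : M →ₗ[S] M, LinearMap.ker f = N :=
  ⟨L.projection N h.symm, Submodule.ker_projection h.symm⟩

theorem IsEndonoetherian.exists_eq_of_forall_exists_ker_eq {S M : Type*} [Ring S]
    [AddCommGroup M] [Module S M] (hM : IsEndonoetherian S M) (Ms : ℕ → Submodule S M)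
    (hker : ∀ i, ∃ f : M →ₗ[S] M, LinearMap.ker f = Ms i) (hasc : ∀ i, Ms i ≤ Ms (i + 1)) :
    ∃ n, ∀ k, n ≤ k → Ms k = Ms n := by
  choose f hf using hker
  obtain ⟨n, hn⟩ := hM f fun i => by simpa only [hf] using hasc i
  exact ⟨n, fun k hk => by simpa only [hf] using hn k hk⟩

/-- An endonoetherian right `R`-module satisfies the ascending chain condition on direct
summands. -/
theorem isEndonoetherian_acc_directSummands (R M : Type*) [Ring R] [AddCommGroup M]
    [Module Rᵐᵒᵖ M] (hM : IsEndonoetherian Rᵐᵒᵖ M) (Ms : ℕ → Submodule Rᵐᵒᵖ M)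
    (hsumm : ∀ i, ∃ L : Submodule Rᵐᵒᵖ M, Ms i ⊓ L = ⊥ ∧ Ms i ⊔ L = ⊤)
    (hasc : ∀ i, Ms i ≤ Ms (i + 1)) :
    ∃ n, ∀ k, n ≤ k → Ms k = Ms n := by
  refine hM.exists_eq_of_forall_exists_ker_eq Ms (fun i => ?_) hasc
  obtain ⟨L, hinf, hsup⟩ := hsumm i
  exact Submodule.exists_ker_eq_of_isCompl (IsCompl.of_eq hinf hsup)
end

section
/- Let R be a ring that is right endoartinian and let I be a two-sided ideal of R. Then the quotient ring R/I is right endoartinian. -/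
/-- Left multiplication as an endomorphism of the right module `S`. -/
def lmulEnd {S : Type*} [Ring S] (a : S) : S →ₗ[Sᵐᵒᵖ] S where
  toFun x := a * x
  map_add' := mul_add a
  map_smul' r x := by simp [MulOpposite.smul_eq_mul_unop, mul_assoc]

lemma endo_apply_eq {S : Type*} [Ring S] (f : S →ₗ[Sᵐᵒᵖ] S) (x : S) : f x = f 1 * x := by
  have h := f.map_smul (MulOpposite.op x) 1
  simpa [MulOpposite.smul_eq_mul_unop] using h

/-- A quotient of a right endoartinian ring by a two-sided ideal is right endoartinian. -/
theorem quotient_isEndoartinian (R : Type*) [Ring R]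
    (hR : IsEndoartinian Rᵐᵒᵖ R) (I : TwoSidedIdeal R) :
    IsEndoartinian (I.ringCon.Quotient)ᵐᵒᵖ I.ringCon.Quotient := by
  intro f hdesc
  set π : R →+* I.ringCon.Quotient := I.ringCon.mk' with hπ
  have hsurj : Function.Surjective π := fun y => Quot.exists_rep y
  -- choose witnesses for the descending chain
  have hmem : ∀ n, ∃ x, f n x = f (n + 1) 1 := fun n =>
    hdesc n (LinearMap.mem_range_self (f (n + 1)) 1)
  choose xb hxb using hmem
  choose c hc using fun n => hsurj (xb n)
  obtain ⟨a0, ha0⟩ := hsurj (f 0 1)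
  -- lift of the chain to R
  set a : ℕ → R := fun n => Nat.rec a0 (fun n an => an * c n) n with ha_def
  have ha_succ : ∀ n, a (n + 1) = a n * c n := fun n => rfl
  have ha : ∀ n, π (a n) = f n 1 := by
    intro n
    induction n with
    | zero => exact ha0
    | succ n ih =>
      rw [ha_succ, map_mul, ih, hc, ← endo_apply_eq, hxb]
  -- the lifted chain of left multiplications
  have hdesc' : ∀ n, LinearMap.range (lmulEnd (a (n + 1))) ≤ LinearMap.range (lmulEnd (a n)) := by
    intro n y hy
    obtain ⟨x, hx⟩ := hy
    exact ⟨c n * x, by simpa [lmulEnd, ha_succ, mul_assoc] using hx⟩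
  obtain ⟨N, hN⟩ := hR (fun n => lmulEnd (a n)) hdesc'
  refine ⟨N, fun k hk => ?_⟩
  have hmono : ∀ m n, m ≤ n → LinearMap.range (f n) ≤ LinearMap.range (f m) := by
    intro m n hmn
    induction hmn with
    | refl => exact le_rfl
    | step h ih => exact le_trans (hdesc _) ih
  refine le_antisymm (hmono N k hk) ?_
  intro y hy
  obtain ⟨x, hx⟩ := hy
  -- a N lies in the range of lmulEnd (a k)
  have haN : a N ∈ LinearMap.range (lmulEnd (a k)) := by
    rw [hN k hk]
    exact ⟨1, mul_one _⟩
  obtain ⟨r, hr⟩ := haN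
  have hr' : a k * r = a N := hr
  refine ⟨π r * x, ?_⟩
  rw [endo_apply_eq, ← ha k, ← mul_assoc, ← map_mul, hr', ha N, ← endo_apply_eq, hx]
end

section
/- Let R be a commutative ring. Then R is endoartinian if and only if R satisfies the strongly DCCR* condition. -/
/-- A commutative ring is endoartinian iff it satisfies the strongly DCCR* condition:
for every ideal `I` and every sequence `(a i)`, the descending chain
`I·a₁ ⊇ I·a₁a₂ ⊇ ⋯` stabilizes. -/
theorem isEndoartinian_iff_strongly_DCCR_star (R : Type*) [CommRing R] :
    IsEndoartinian R R ↔
      ∀ (I : Ideal R) (a : ℕ → R),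
        ∃ n, ∀ k, n ≤ k →
          ((fun x => x * ∏ i ∈ Finset.range (k + 1), a i) '' (I : Set R)) =
          ((fun x => x * ∏ i ∈ Finset.range (n + 1), a i) '' (I : Set R)) := by
  constructor
  · intro h I a
    set c : ℕ → R := fun k => ∏ i ∈ Finset.range (k + 1), a i with hc
    have hstep : ∀ k, c (k + 1) = c k * a (k + 1) := fun k => Finset.prod_range_succ a (k + 1)
    set f : ℕ → R →ₗ[R] R := fun k => LinearMap.mulRight R (c k) with hf
    have hdesc : ∀ n, LinearMap.range (f (n + 1)) ≤ LinearMap.range (f n) := by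
      intro n y hy
      obtain ⟨x, rfl⟩ := hy
      refine ⟨x * a (n + 1), ?_⟩
      simp only [hf, LinearMap.mulRight_apply, hstep]
      ring
    obtain ⟨n, hn⟩ := h f hdesc
    refine ⟨n, fun k hk => ?_⟩
    -- c n ∈ range (f k), so c n = u * c k for some u
    have hcn : c n ∈ LinearMap.range (f k) := by
      rw [hn k hk]
      exact ⟨1, by simp [hf]⟩
    obtain ⟨u, hu⟩ := hcn
    simp only [hf, LinearMap.mulRight_apply] at hu
    apply Set.Subset.antisymm
    · -- I·c k ⊆ I·c n, by induction on k ≥ n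
      have key : ∀ m, n ≤ m →
          ((fun x => x * c m) '' (I : Set R)) ⊆ ((fun x => x * c n) '' (I : Set R)) := by
        intro m hm
        induction m, hm using Nat.le_induction with
        | base => exact subset_rfl
        | succ m hm ih =>
          refine Set.Subset.trans ?_ ih
          rintro y ⟨x, hx, rfl⟩
          refine ⟨x * a (m + 1), I.mul_mem_right _ hx, ?_⟩
          simp only [hstep]
          ring
      exact key k hk
    · rintro y ⟨x, hx, rfl⟩
      refine ⟨x * u, I.mul_mem_right _ hx, ?_⟩
      show x * u * c k = x * c n
      rw [← hu]
      ring
  · intro h f hdesc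
    set r : ℕ → R := fun k => f k 1 with hr
    have happly : ∀ k (x : R), f k x = x * r k := by
      intro k x
      have : f k x = f k (x • 1) := by rw [smul_eq_mul, mul_one]
      rw [this, map_smul, smul_eq_mul, hr]
    have hmem : ∀ k, ∃ b, b * r k = r (k + 1) := by
      intro k
      have : r (k + 1) ∈ LinearMap.range (f k) := hdesc k ⟨1, rfl⟩
      obtain ⟨b, hb⟩ := this
      exact ⟨b, by rw [← happly]; exact hb⟩
    choose b hb using hmem
    set a : ℕ → R := fun k => Nat.rec (r 0) (fun m _ => b m) k with ha
    have hprod : ∀ k, ∏ i ∈ Finset.range (k + 1), a i = r k := by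
      intro k
      induction k with
      | zero => simp [ha]
      | succ m ih =>
        rw [Finset.prod_range_succ, ih]
        have : a (m + 1) = b m := rfl
        rw [this, mul_comm, hb]
    obtain ⟨n, hn⟩ := h ⊤ a
    refine ⟨n, fun k hk => ?_⟩
    have hsets := hn k hk
    simp only [hprod] at hsets
    ext y
    constructor
    · rintro ⟨x, rfl⟩
      have : f k x ∈ (fun z => z * r k) '' ((⊤ : Ideal R) : Set R) := by
        exact ⟨x, trivial, (happly k x).symm⟩
      rw [hsets] at this
      obtain ⟨z, -, hz⟩ := this
      exact ⟨z, by rw [happly n z]; exact hz⟩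
    · rintro ⟨x, rfl⟩
      have : f n x ∈ (fun z => z * r n) '' ((⊤ : Ideal R) : Set R) := by
        exact ⟨x, trivial, (happly n x).symm⟩
      rw [← hsets] at this
      obtain ⟨z, -, hz⟩ := this
      exact ⟨z, by rw [happly k z]; exact hz⟩
end

section
/- Let R be a ring and M a semisimple right R-module. Then the following are equivalent: (1) M is endonoetherian; (2) M is endoartinian; (3) M has finite length (i.e., M is both a noetherian and an artinian R-module). -/
/-!
Noetherian (artinian) modules trivially satisfy the endomorphism chain conditions, which only
constrain special chains of submodules. Conversely, in a semisimple module every submodule `N`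
has a complement `q`, and the projection onto `q` along `N` has kernel `N` while the projection
onto `N` along `q` has image `N`; so every chain of submodules is a chain of kernels (images)
of endomorphisms. Finally, a semisimple module is noetherian iff it is artinian, as both mean
that it is a finite direct sum of simple modules.
-/

open LinearMap Submodule

section

variable {S M : Type*} [Ring S] [AddCommGroup M] [Module S M]

theorem IsEndonoetherian.of_isNoetherian [IsNoetherian S M] : IsEndonoetherian S M := by
  intro f hf
  obtain ⟨n, hn⟩ := monotone_stabilizes_iff_noetherian.mpr ‹_›
    ⟨fun n => ker (f n), monotone_nat_of_le_succ hf⟩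
  exact ⟨n, fun k hk => (hn k hk).symm⟩

theorem IsEndoartinian.of_isArtinian [IsArtinian S M] : IsEndoartinian S M := by
  intro f hf
  obtain ⟨n, hn⟩ := monotone_stabilizes_iff_artinian.mpr ‹_›
    ⟨fun n => OrderDual.toDual (range (f n)), monotone_nat_of_le_succ hf⟩
  exact ⟨n, fun k hk => (OrderDual.toDual_inj.mp (hn k hk)).symm⟩

variable [IsSemisimpleModule S M]

theorem IsSemisimpleModule.exists_ker_eq (N : Submodule S M) : ∃ f : M →ₗ[S] M, ker f = N :=
  let ⟨q, hq⟩ := exists_isCompl N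
  ⟨q.projection N hq.symm, ker_projection hq.symm⟩

theorem IsSemisimpleModule.exists_range_eq (N : Submodule S M) : ∃ f : M →ₗ[S] M, range f = N :=
  let ⟨q, hq⟩ := exists_isCompl N
  ⟨N.projection q hq, range_projection hq⟩

theorem IsEndonoetherian.isNoetherian (h : IsEndonoetherian S M) : IsNoetherian S M := by
  refine monotone_stabilizes_iff_noetherian.mp fun c => ?_
  choose f hf using fun n => IsSemisimpleModule.exists_ker_eq (c n)
  obtain ⟨n, hn⟩ := h f fun n => by rw [hf, hf]; exact c.monotone n.le_succ
  exact ⟨n, fun k hk => by rw [← hf, ← hf, hn k hk]⟩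

theorem IsEndoartinian.isArtinian (h : IsEndoartinian S M) : IsArtinian S M := by
  refine monotone_stabilizes_iff_artinian.mp fun c => ?_
  choose f hf using fun n => IsSemisimpleModule.exists_range_eq (OrderDual.ofDual (c n))
  obtain ⟨n, hn⟩ := h f fun n => by rw [hf, hf]; exact c.monotone n.le_succ
  exact ⟨n, fun k hk => OrderDual.ofDual.injective (by rw [← hf, ← hf, hn k hk])⟩

end

/-- For a semisimple right `R`-module `M`, being endonoetherian, being endoartinian and
having finite length (being both noetherian and artinian) are equivalent. -/
theorem semisimple_endo_chain_conditions_iff_finite_length (R M : Type*) [Ring R]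
    [AddCommGroup M] [Module Rᵐᵒᵖ M] (hss : IsSemisimpleModule Rᵐᵒᵖ M) :
    (IsEndonoetherian Rᵐᵒᵖ M ↔ (IsNoetherian Rᵐᵒᵖ M ∧ IsArtinian Rᵐᵒᵖ M)) ∧
    (IsEndoartinian Rᵐᵒᵖ M ↔ (IsNoetherian Rᵐᵒᵖ M ∧ IsArtinian Rᵐᵒᵖ M)) := by
  have := hss
  have noetherian_iff_artinian : IsNoetherian Rᵐᵒᵖ M ↔ IsArtinian Rᵐᵒᵖ M :=
    (IsSemisimpleModule.finite_tfae (R := Rᵐᵒᵖ) (M := M)).out 1 2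
  refine ⟨⟨fun h => ?_, fun ⟨_, _⟩ => .of_isNoetherian⟩,
    ⟨fun h => ?_, fun ⟨_, _⟩ => .of_isArtinian⟩⟩
  · have := h.isNoetherian
    exact ⟨this, noetherian_iff_artinian.mp this⟩
  · have := h.isArtinian
    exact ⟨noetherian_iff_artinian.mpr this, this⟩
end

section
/- Let R be a ring and M an endoartinian right R-module. Then M satisfies the Schröder–Bernstein property: for any two direct summands A and B of M such that there exist an injective R-module homomorphism A → B and an injective R-module homomorphism B → A, the modules A and B are isomorphic as R-modules. -/
namespace IsEndoartinian

variable {S M N : Type*} [Ring S] [AddCommGroup M] [Module S M] [AddCommGroup N] [Module S N]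

theorem of_retract (hM : IsEndoartinian S M) (i : N →ₗ[S] M) (p : M →ₗ[S] N)
    (hpi : p ∘ₗ i = LinearMap.id) : IsEndoartinian S N := by
  have hi : Function.Injective i := Function.LeftInverse.injective (LinearMap.congr_fun hpi)
  have hp : LinearMap.range p = ⊤ :=
    LinearMap.range_eq_top.mpr (Function.RightInverse.surjective (LinearMap.congr_fun hpi))
  intro φ hφ
  have hrange : ∀ n, LinearMap.range (i ∘ₗ φ n ∘ₗ p) = (LinearMap.range (φ n)).map i := fun n => by
    rw [LinearMap.range_comp, LinearMap.range_comp_of_range_eq_top _ hp]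
  obtain ⟨n, hn⟩ := hM (fun n => i ∘ₗ φ n ∘ₗ p) fun n => by
    simp only [hrange]
    exact Submodule.map_mono (hφ n)
  refine ⟨n, fun k hk => Submodule.map_injective_of_injective hi ?_⟩
  simpa only [hrange] using hn k hk

theorem surjective_of_injective (hM : IsEndoartinian S M) (φ : Module.End S M)
    (hφ : Function.Injective φ) : Function.Surjective φ := by
  obtain ⟨n, hn⟩ := hM (fun n => φ ^ n) fun n => by
    simpa only [Module.End.iterate_succ] using LinearMap.range_comp_le_range φ (φ ^ n)
  intro x
  obtain ⟨y, hy⟩ : (φ ^ n) x ∈ LinearMap.range (φ ^ (n + 1)) := by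
    rw [hn (n + 1) n.le_succ]
    exact LinearMap.mem_range_self _ x
  rw [Module.End.iterate_succ, LinearMap.comp_apply] at hy
  exact ⟨y, Module.End.iterate_injective hφ n hy⟩

end IsEndoartinian

theorem isEndoartinian_SB_property_general (R M : Type*) [Ring R] [AddCommGroup M]
    [Module Rᵐᵒᵖ M] (hM : IsEndoartinian Rᵐᵒᵖ M) (A B : Submodule Rᵐᵒᵖ M)
    (hA : ∃ L : Submodule Rᵐᵒᵖ M, A ⊓ L = ⊥ ∧ A ⊔ L = ⊤)
    (f : A →ₗ[Rᵐᵒᵖ] B) (hf : Function.Injective f)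
    (g : B →ₗ[Rᵐᵒᵖ] A) (hg : Function.Injective g) :
    Nonempty (A ≃ₗ[Rᵐᵒᵖ] B) := by
  obtain ⟨L, hAL, hAL'⟩ := hA
  have hcompl : IsCompl A L := IsCompl.of_eq hAL hAL'
  have hA_endo : IsEndoartinian Rᵐᵒᵖ A :=
    hM.of_retract A.subtype (A.projectionOnto L hcompl) (A.projectionOnto_comp_subtype hcompl)
  have hgf : Function.Surjective (g ∘ₗ f) := hA_endo.surjective_of_injective _ (hg.comp hf)
  exact ⟨(LinearEquiv.ofBijective g ⟨hg, Function.Surjective.of_comp hgf⟩).symm⟩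

/-- An endoartinian module satisfies the Schröder–Bernstein property: mutually
subisomorphic direct summands are isomorphic. -/
theorem isEndoartinian_SB_property (R M : Type*) [Ring R] [AddCommGroup M]
    [Module Rᵐᵒᵖ M] (hM : IsEndoartinian Rᵐᵒᵖ M) (A B : Submodule Rᵐᵒᵖ M)
    (hA : ∃ L : Submodule Rᵐᵒᵖ M, A ⊓ L = ⊥ ∧ A ⊔ L = ⊤)
    (hB : ∃ L : Submodule Rᵐᵒᵖ M, B ⊓ L = ⊥ ∧ B ⊔ L = ⊤)
    (f : A →ₗ[Rᵐᵒᵖ] B) (hf : Function.Injective f)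
    (g : B →ₗ[Rᵐᵒᵖ] A) (hg : Function.Injective g) :
    Nonempty (A ≃ₗ[Rᵐᵒᵖ] B) :=
  isEndoartinian_SB_property_general R M hM A B hA f hf g hg
end

section
/- Let R be a right endoartinian ring. Then the following are equivalent: (1) every idempotent in R is central; (2) there exist n ∈ ℕ and rings R_1, …, R_n, each of which is a local ring, such that R is isomorphic as a ring to the product R_1 × ⋯ × R_n. -/
/-- DCC on principal right ideals, element form. -/
def DCCP (S : Type*) [Ring S] : Prop :=
  ∀ a : ℕ → S, (∀ n, ∃ r, a (n + 1) = a n * r) →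
    ∃ n, ∀ k, n ≤ k → ∃ s, a n = a k * s

section basic
variable {S : Type*} [Ring S]

/-- Minimal elements for families of principal right ideals. -/
theorem DCCP.exists_minimal (h : DCCP S) (P : S → Prop) (c0 : S) (h0 : P c0) :
    ∃ b, P b ∧ ∀ d, P d → (∃ t, d = b * t) → ∃ t, b = d * t := by
  by_contra hcon
  push_neg at hcon
  -- build a strictly descending chain
  have step : ∀ b : {x : S // P x}, ∃ d : {x : S // P x},
      (∃ t, (d : S) = b * t) ∧ ¬∃ t, (b : S) = d * t := by
    rintro ⟨b, hb⟩
    obtain ⟨d, hd, ht, hnt⟩ := hcon b hb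
    exact ⟨⟨d, hd⟩, ht, by push_neg; exact hnt⟩
  choose g hg1 hg2 using step
  set u : ℕ → {x : S // P x} := fun n => g^[n] ⟨c0, h0⟩ with hu
  have hustep : ∀ n, u (n + 1) = g (u n) := by
    intro n
    simp [hu, Function.iterate_succ_apply']
  obtain ⟨n, hn⟩ := h (fun n => (u n : S)) (by
    intro n
    show ∃ r, (u (n+1) : S) = u n * r
    rw [hustep n]
    exact hg1 (u n))
  obtain ⟨s, hs⟩ := hn (n + 1) (Nat.le_succ n)
  rw [hustep n] at hs
  exact hg2 (u n) ⟨s, hs⟩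

theorem isUnit_of_right_inverse [Nontrivial S]
    (hid : ∀ f : S, f * f = f → f = 0 ∨ f = 1) {b y : S} (h : b * y = 1) : IsUnit b := by
  have hyb : (y * b) * (y * b) = y * b := by
    calc (y * b) * (y * b) = y * (b * y) * b := by noncomm_ring
    _ = y * b := by rw [h]; noncomm_ring
  rcases hid _ hyb with h0 | h1
  · exfalso
    have : b = 0 := by
      have : b * (y * b) = b := by
        calc b * (y * b) = (b * y) * b := by rw [mul_assoc]
        _ = b := by rw [h, one_mul]
      rw [h0, mul_zero] at this
      exact this.symm
    rw [this, zero_mul] at h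
    exact one_ne_zero h.symm
  · -- y * b = 1 and b * y = 1
    exact ⟨⟨b, y, h, h1⟩, rfl⟩

end basic

section keylemma
variable {S : Type*} [Ring S]

theorem key_poly_dvd (n : ℕ) :
    ∃ Q : Polynomial ℤ, (1 - (1 - Polynomial.X ^ n) ^ n) = Polynomial.X ^ n * Q := by
  have := sub_dvd_pow_sub_pow (1 : Polynomial ℤ) (1 - Polynomial.X ^ n) n
  rw [sub_sub_cancel, one_pow] at this
  obtain ⟨Q, hQ⟩ := this
  exact ⟨Q, hQ⟩

/-- If `e * e - e` is nilpotent, there is an idempotent of the form `e ^ n * w`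
whose "complement" is killed by anything killed by `1 - e`. -/
theorem lift_split (e : S) (hz : IsNilpotent (e - e * e)) :
    ∃ (f : S) (n : ℕ) (w : S), f * f = f ∧ 0 < n ∧ f = e ^ n * w ∧
      1 - f = (1 - e ^ n) ^ n := by
  obtain ⟨m, hm⟩ := hz
  have hm' : (e - e ^ 2) ^ (m + 1) = 0 := by
    rw [pow_two, pow_succ, hm, zero_mul]
  set n := m + 1
  have hidem := isIdempotentElem_one_sub_one_sub_pow_pow e n hm'
  obtain ⟨Q, hQ⟩ := key_poly_dvd n
  refine ⟨1 - (1 - e ^ n) ^ n, n, Polynomial.aeval e Q, hidem, Nat.succ_pos m, ?_, sub_sub_cancel 1 _⟩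
  have := congrArg (Polynomial.aeval e) hQ
  simpa using this

end keylemma

section lemmaL
variable {S : Type*} [Ring S]

theorem nilpotent_or_unit [Nontrivial S] (hd : DCCP S)
    (hid : ∀ f : S, f * f = f → f = 0 ∨ f = 1) (a : S) : IsNilpotent a ∨ IsUnit a := by
  by_cases hnil : IsNilpotent a
  · exact Or.inl hnil
  right
  -- stabilize the chain of powers of a
  obtain ⟨N, hN⟩ := hd (fun k => a ^ k) (fun n => ⟨a, pow_succ a n⟩)
  set B := a ^ (N + 1) with hB
  have hBsq : ∃ c, B = B * B * c := by
    obtain ⟨s, hs⟩ := hN (2 * N + 2) (by omega)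
    refine ⟨a * s, ?_⟩
    have h1 : B * B = a ^ (2 * N + 2) := by rw [hB, ← pow_add]; ring_nf
    have h2 : B = a ^ (2 * N + 2) * (a * s) := by
      calc B = a * a ^ N := by rw [hB, pow_succ']
      _ = a * (a ^ (2 * N + 2) * s) := by rw [← hs]
      _ = (a * a ^ (2 * N + 2)) * s := by rw [mul_assoc]
      _ = (a ^ (2 * N + 2) * a) * s := by rw [← pow_succ, ← pow_succ']
      _ = a ^ (2 * N + 2) * (a * s) := by rw [mul_assoc]
    rw [h1]; exact h2
  set P : S → Prop := fun d => ¬ IsNilpotent d ∧ (∃ t, d = B * t) ∧ (∃ c, d = d * d * c)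
    with hP
  have hPB : P B := by
    refine ⟨fun ⟨j, hj⟩ => hnil ⟨(N + 1) * j, by rw [pow_mul]; exact hj⟩,
      ⟨1, (mul_one B).symm⟩, hBsq⟩
  obtain ⟨b, hPb, hmin⟩ := hd.exists_minimal P B hPB
  obtain ⟨hbnil, ⟨t₀, hbB⟩, ⟨c, hbc⟩⟩ := hPb
  have hb0 : b ≠ 0 := fun h => hbnil ⟨1, by rw [pow_one, h]⟩
  set e := b * c with he
  have hbe : b * e = b := by
    rw [he, ← mul_assoc, ← hbc]
  have hbek : ∀ k, b * e ^ k = b := by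
    intro k
    induction k with
    | zero => simp
    | succ k ih => rw [pow_succ, ← mul_assoc, ih, hbe]
  have hbz : b * (e - e * e) = 0 := by
    have h2 : b * (e * e) = b := by rw [← mul_assoc b e e, hbe, hbe]
    rw [mul_sub, hbe, h2, sub_self]
  by_cases hznil : IsNilpotent (e - e * e)
  · -- lift to an honest idempotent
    obtain ⟨f, n, w, hff, hn, hfw, hcomp⟩ := lift_split e hznil
    have hbub : IsUnit b := by
      rcases hid f hff with hf0 | hf1
      · exfalso
        have h1e : b * (1 - e ^ n) = 0 := by rw [mul_sub, mul_one, hbek n, sub_self]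
        have h1f : b * (1 - f) = 0 := by
          rw [hcomp]
          obtain ⟨n', rfl⟩ := Nat.exists_eq_succ_of_ne_zero hn.ne'
          rw [pow_succ', ← mul_assoc, h1e, zero_mul]
        rw [hf0, sub_zero, mul_one] at h1f
        exact hb0 h1f
      · -- f = 1 : b is right invertible
        obtain ⟨n', rfl⟩ := Nat.exists_eq_succ_of_ne_zero hn.ne'
        have : b * (c * (e ^ n' * w)) = 1 := by
          calc b * (c * (e ^ n' * w)) = ((b * c) * e ^ n') * w := by
                rw [mul_assoc, mul_assoc]
          _ = e ^ (n' + 1) * w := by rw [← he, ← pow_succ']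
          _ = f := hfw.symm
          _ = 1 := hf1
        exact isUnit_of_right_inverse hid this
    -- b unit → B unit → a unit
    obtain ⟨u, hu⟩ := hbub
    have hBu : IsUnit B := by
      apply isUnit_of_right_inverse hid (y := t₀ * ↑u⁻¹)
      rw [← mul_assoc, ← hbB, ← hu, Units.mul_inv]
    obtain ⟨v, hv⟩ := hBu
    apply isUnit_of_right_inverse hid (y := a ^ N * ↑v⁻¹)
    rw [← mul_assoc, ← pow_succ', ← hB, ← hv, Units.mul_inv]
  · -- the non-nilpotent z would contradict minimality
    exfalso
    set z := e - e * e with hz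
    obtain ⟨M, hM⟩ := hd (fun k => z ^ k) (fun n => ⟨z, pow_succ z n⟩)
    set d := z ^ (M + 1) with hd'
    have hzb : z = b * (c - c * e) := by
      simp only [hz, he]; noncomm_ring
    have hPd : P d := by
      refine ⟨fun ⟨j, hj⟩ => hznil ⟨(M + 1) * j, by rw [pow_mul]; exact hj⟩, ?_, ?_⟩
      · refine ⟨t₀ * ((c - c * e) * z ^ M), ?_⟩
        calc d = z * z ^ M := by rw [hd', pow_succ']
        _ = b * ((c - c * e) * z ^ M) := by rw [hzb, mul_assoc]
        _ = B * (t₀ * ((c - c * e) * z ^ M)) := by rw [hbB, mul_assoc]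
      · obtain ⟨s, hs⟩ := hM (2 * M + 2) (by omega)
        refine ⟨z * s, ?_⟩
        have h1 : d * d = z ^ (2 * M + 2) := by rw [hd', ← pow_add]; ring_nf
        calc d = z * z ^ M := by rw [hd', pow_succ']
        _ = z * (z ^ (2 * M + 2) * s) := by rw [← hs]
        _ = (z * z ^ (2 * M + 2)) * s := by rw [mul_assoc]
        _ = (z ^ (2 * M + 2) * z) * s := by rw [← pow_succ, ← pow_succ']
        _ = z ^ (2 * M + 2) * (z * s) := by rw [mul_assoc]
        _ = d * d * (z * s) := by rw [h1]
    have hdb : ∃ t, d = b * t := by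
      refine ⟨(c - c * e) * z ^ M, ?_⟩
      calc d = z * z ^ M := by rw [hd', pow_succ']
      _ = b * ((c - c * e) * z ^ M) := by rw [hzb, mul_assoc]
    obtain ⟨t₃, ht₃⟩ := by
      -- minimality needs (∃ t, d = b * t); note `hmin` is stated for ideals under b? 
      exact hmin d hPd hdb
    have hbd : b * d = 0 := by
      rw [hd', pow_succ', ← mul_assoc, hbz, zero_mul]
    have hbb : b * b = 0 := by
      nth_rewrite 2 [ht₃]
      rw [← mul_assoc, hbd, zero_mul]
    have : b = 0 := by rw [hbc, hbb, zero_mul]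
    exact hb0 this

theorem isLocalRing_of_dccp [Nontrivial S] (hd : DCCP S)
    (hid : ∀ f : S, f * f = f → f = 0 ∨ f = 1) : IsLocalRing S := by
  constructor
  intro x y hxy
  rcases nilpotent_or_unit hd hid x with hx | hx
  · right
    have : y = 1 - x := by rw [← hxy]; abel
    rw [this]
    exact hx.isUnit_one_sub
  · exact Or.inl hx

end lemmaL

section quot
variable {R : Type*} [Ring R]

/-- The congruence `x ~ y ↔ e*x = e*y` for a central idempotent `e`. -/
def idemCon (e : R) (hc : ∀ r : R, e * r = r * e) : RingCon R where
  r x y := e * x = e * y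
  iseqv := ⟨fun _ => rfl, Eq.symm, Eq.trans⟩
  add' := fun {w x y z} h1 h2 => by
    show e * (w + y) = e * (x + z)
    rw [mul_add, mul_add, h1, h2]
  mul' := fun {w x y z} h1 h2 => by
    show e * (w * y) = e * (x * z)
    calc e * (w * y) = (e * w) * y := by rw [mul_assoc]
    _ = (e * x) * y := by rw [h1]
    _ = (x * e) * y := by rw [hc]
    _ = x * (e * y) := by rw [mul_assoc]
    _ = x * (e * z) := by rw [h2]
    _ = (x * e) * z := by rw [mul_assoc]
    _ = e * (x * z) := by rw [← hc, mul_assoc]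

theorem idemCon_eq (e : R) (hc : ∀ r : R, e * r = r * e) {x y : R} :
    (x : (idemCon e hc).Quotient) = (y : (idemCon e hc).Quotient) ↔ e * x = e * y :=
  RingCon.eq _

theorem idemCon_surj (e : R) (hc : ∀ r : R, e * r = r * e)
    (q : (idemCon e hc).Quotient) : ∃ x : R, (x : (idemCon e hc).Quotient) = q :=
  Quotient.exists_rep q

theorem idemCon_nontrivial (e : R) (he : e * e = e) (hc : ∀ r : R, e * r = r * e)
    (h0 : e ≠ 0) : Nontrivial (idemCon e hc).Quotient := by
  refine ⟨(0 : R), (1 : R), fun h => h0 ?_⟩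
  rw [idemCon_eq] at h
  rw [mul_zero, mul_one] at h
  exact h.symm

theorem idemCon_idem (e : R) (he : e * e = e) (hc : ∀ r : R, e * r = r * e)
    (hprim : ∀ f : R, f * f = f → e * f = f → f = 0 ∨ f = e)
    (q : (idemCon e hc).Quotient) (hq : q * q = q) : q = 0 ∨ q = 1 := by
  obtain ⟨u, rfl⟩ := idemCon_surj e hc q
  have h1 : e * (u * u) = e * u := (idemCon_eq e hc).1 hq
  have h2 : (e * u) * (e * u) = e * u := by
    calc (e * u) * (e * u) = e * (u * (e * u)) := by rw [mul_assoc]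
    _ = e * ((u * e) * u) := by rw [← mul_assoc u e u]
    _ = e * ((e * u) * u) := by rw [← hc u]
    _ = e * (e * (u * u)) := by rw [mul_assoc]
    _ = (e * e) * (u * u) := by rw [← mul_assoc]
    _ = e * (u * u) := by rw [he]
    _ = e * u := h1
  have h3 : e * (e * u) = e * u := by rw [← mul_assoc, he]
  rcases hprim (e * u) h2 h3 with h | h
  · left
    have : (u : (idemCon e hc).Quotient) = (0 : R) := by
      rw [idemCon_eq, mul_zero, h]
    simpa using this
  · right
    have : (u : (idemCon e hc).Quotient) = (1 : R) := by
      rw [idemCon_eq, mul_one, h]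
    simpa using this

theorem idemCon_dccp (e : R) (he : e * e = e) (hc : ∀ r : R, e * r = r * e)
    (hd : DCCP R) : DCCP (idemCon e hc).Quotient := by
  intro A hA
  choose a ha using fun n => idemCon_surj e hc (A n)
  -- the chain e * a n in R
  have hchain : ∀ n, ∃ r : R, e * a (n + 1) = (e * a n) * r := by
    intro n
    obtain ⟨q, hq⟩ := hA n
    obtain ⟨r, hr⟩ := idemCon_surj e hc q
    refine ⟨r, ?_⟩
    have : (a (n+1) : (idemCon e hc).Quotient) = ((a n * r : R) : _) := by
      rw [ha (n+1), hq, RingCon.coe_mul, ha n, hr]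
    have h2 : e * a (n+1) = e * (a n * r) := (idemCon_eq e hc).1 this
    rw [h2, ← mul_assoc]
  obtain ⟨n, hn⟩ := hd (fun n => e * a n) hchain
  refine ⟨n, fun k hk => ?_⟩
  obtain ⟨s, hs⟩ := hn k hk
  refine ⟨(s : R), ?_⟩
  rw [← ha n, ← ha k]
  show ((a n : R) : (idemCon e hc).Quotient) = ((a k * s : R) : _)
  rw [idemCon_eq]
  calc e * a n = (e * e) * a n := by rw [he]
  _ = e * (e * a n) := by rw [mul_assoc]
  _ = e * ((e * a k) * s) := by rw [hs]
  _ = e * (e * (a k * s)) := by rw [mul_assoc]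
  _ = (e * e) * (a k * s) := by rw [mul_assoc]
  _ = e * (a k * s) := by rw [he]

end quot

section decomp
variable {R : Type*} [Ring R]

theorem dccp_wf (hd : DCCP R) :
    WellFounded (fun x y : R => (∃ t, x = y * t) ∧ ¬∃ t, y = x * t) := by
  haveI : IsStrictOrder R (fun x y : R => (∃ t, x = y * t) ∧ ¬∃ t, y = x * t) :=
    { irrefl := fun a h => h.2 h.1
      trans := fun a b c hab hbc => by
        obtain ⟨⟨t, ht⟩, hab2⟩ := hab
        obtain ⟨⟨s, hs⟩, hbc2⟩ := hbc
        refine ⟨⟨s * t, by rw [ht, hs, mul_assoc]⟩, ?_⟩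
        rintro ⟨w, hw⟩
        exact hab2 ⟨w * s, by rw [hs, hw, mul_assoc]⟩ }
  rw [RelEmbedding.wellFounded_iff_isEmpty]
  constructor
  intro g
  have hstep : ∀ n : ℕ, (∃ t, g (n + 1) = g n * t) ∧ ¬∃ t, g n = g (n + 1) * t :=
    fun n => g.map_rel_iff.2 (Nat.lt_succ_self n)
  obtain ⟨n, hn⟩ := hd (fun n => g n) (fun n => (hstep n).1)
  exact (hstep n).2 (hn (n + 1) (Nat.le_succ n))

theorem wf_ind {R : Type*} {r : R → R → Prop} (hwf : WellFounded r) {C : R → Prop}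
    (ind : ∀ x, (∀ y, r y x → C y) → C x) : ∀ a, C a :=
  fun a => hwf.induction a ind

theorem decomp (hid : ∀ f : R, f * f = f → ∀ r : R, f * r = r * f) (hd : DCCP R) :
    ∀ e : R, e * e = e → ∃ (n : ℕ) (v : Fin n → R),
      (∀ i, v i * v i = v i) ∧ (∀ i, v i ≠ 0) ∧ (∀ i, e * v i = v i) ∧
      (∀ i j, i ≠ j → v i * v j = 0) ∧ (∑ i, v i = e) ∧
      (∀ i, ∀ f : R, f * f = f → v i * f = f → f = 0 ∨ f = v i) := by
  refine wf_ind (dccp_wf hd) ?_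
  intro e ih he
  by_cases he0 : e = 0
  · exact ⟨0, Fin.elim0, fun i => i.elim0, fun i => i.elim0, fun i => i.elim0,
      fun i => i.elim0, by simp [he0], fun i => i.elim0⟩
  by_cases hprim : ∀ f : R, f * f = f → e * f = f → f = 0 ∨ f = e
  · refine ⟨1, fun _ => e, fun _ => he, fun _ => he0, fun _ => by rw [he],
      fun i j hij => absurd (Subsingleton.elim i j) hij, by simp, fun _ => hprim⟩
  push_neg at hprim
  obtain ⟨f, hff, hef, hf0, hfe⟩ := hprim
  have hfe' : f * e = f := by rw [hid f hff e, hef]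
  set e₂ := e - f with he₂def
  have he₂ : e₂ * e₂ = e₂ := by
    rw [he₂def, sub_mul, mul_sub, mul_sub, he, hef, hfe', hff]
    abel
  have hlt_f : (∃ t, f = e * t) ∧ ¬∃ t, e = f * t := by
    refine ⟨⟨f, hef.symm⟩, ?_⟩
    rintro ⟨t, ht⟩
    apply hfe
    calc f = f * e := hfe'.symm
    _ = f * (f * t) := by rw [← ht]
    _ = (f * f) * t := by rw [mul_assoc]
    _ = f * t := by rw [hff]
    _ = e := ht.symm
  have hlt_e₂ : (∃ t, e₂ = e * t) ∧ ¬∃ t, e = e₂ * t := by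
    constructor
    · refine ⟨e₂, ?_⟩
      rw [he₂def, mul_sub, he, hef]
    · rintro ⟨t, ht⟩
      apply hf0
      have hfe₂ : f * e₂ = 0 := by
        rw [he₂def, mul_sub, hfe', hff, sub_self]
      calc f = f * e := hfe'.symm
      _ = f * (e₂ * t) := by rw [← ht]
      _ = (f * e₂) * t := by rw [mul_assoc]
      _ = 0 := by rw [hfe₂, zero_mul]
  obtain ⟨n₁, v₁, hv₁idem, hv₁ne, hv₁le, hv₁orth, hv₁sum, hv₁prim⟩ := ih f hlt_f hff
  obtain ⟨n₂, v₂, hv₂idem, hv₂ne, hv₂le, hv₂orth, hv₂sum, hv₂prim⟩ := ih e₂ hlt_e₂ he₂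
  refine ⟨n₁ + n₂, Fin.append v₁ v₂, ?_, ?_, ?_, ?_, ?_, ?_⟩
  case _ =>
    intro i
    refine Fin.addCases (fun i₁ => ?_) (fun i₂ => ?_) i
    · rw [Fin.append_left]; exact hv₁idem i₁
    · rw [Fin.append_right]; exact hv₂idem i₂
  case _ =>
    intro i
    refine Fin.addCases (fun i₁ => ?_) (fun i₂ => ?_) i
    · rw [Fin.append_left]; exact hv₁ne i₁
    · rw [Fin.append_right]; exact hv₂ne i₂
  case _ =>
    intro i
    refine Fin.addCases (fun i₁ => ?_) (fun i₂ => ?_) i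
    · rw [Fin.append_left]
      calc e * v₁ i₁ = e * (f * v₁ i₁) := by rw [hv₁le]
      _ = (e * f) * v₁ i₁ := by rw [mul_assoc]
      _ = f * v₁ i₁ := by rw [hef]
      _ = v₁ i₁ := hv₁le i₁
    · rw [Fin.append_right]
      have hee₂ : e * e₂ = e₂ := by rw [he₂def, mul_sub, he, hef]
      calc e * v₂ i₂ = e * (e₂ * v₂ i₂) := by rw [hv₂le]
      _ = (e * e₂) * v₂ i₂ := by rw [mul_assoc]
      _ = e₂ * v₂ i₂ := by rw [hee₂]
      _ = v₂ i₂ := hv₂le i₂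
  case _ =>
    -- orthogonality
    have cross : ∀ (i₁ : Fin n₁) (i₂ : Fin n₂), v₁ i₁ * v₂ i₂ = 0 := by
      intro i₁ i₂
      have h1 : v₁ i₁ * e₂ = 0 := by
        have hvf : v₁ i₁ * f = v₁ i₁ := by
          rw [← hid f hff (v₁ i₁), hv₁le]
        have hve : v₁ i₁ * e = v₁ i₁ := by
          have : e * v₁ i₁ = v₁ i₁ := by
            calc e * v₁ i₁ = e * (f * v₁ i₁) := by rw [hv₁le]
            _ = (e * f) * v₁ i₁ := by rw [mul_assoc]
            _ = f * v₁ i₁ := by rw [hef]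
            _ = v₁ i₁ := hv₁le i₁
          rw [hid (v₁ i₁) (hv₁idem i₁) e]
          exact this
        rw [he₂def, mul_sub, hvf, hve, sub_self]
      calc v₁ i₁ * v₂ i₂ = v₁ i₁ * (e₂ * v₂ i₂) := by rw [hv₂le]
      _ = (v₁ i₁ * e₂) * v₂ i₂ := by rw [mul_assoc]
      _ = 0 := by rw [h1, zero_mul]
    intro i j
    refine Fin.addCases (fun i₁ => ?_) (fun i₂ => ?_) i <;>
      refine Fin.addCases (fun j₁ => ?_) (fun j₂ => ?_) j <;> intro hij
    · rw [Fin.append_left, Fin.append_left]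
      exact hv₁orth i₁ j₁ (fun hh => hij (by rw [hh]))
    · rw [Fin.append_left, Fin.append_right]
      exact cross i₁ j₂
    · rw [Fin.append_right, Fin.append_left]
      rw [← hid (v₁ j₁) (hv₁idem j₁) (v₂ i₂)]
      exact cross j₁ i₂
    · rw [Fin.append_right, Fin.append_right]
      exact hv₂orth i₂ j₂ (fun hh => hij (by rw [hh]))
  case _ =>
    rw [Fin.sum_univ_add]
    simp only [Fin.append_left, Fin.append_right]
    rw [hv₁sum, hv₂sum, he₂def]
    abel
  case _ =>
    intro i
    refine Fin.addCases (fun i₁ => ?_) (fun i₂ => ?_) i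
    · rw [Fin.append_left]; exact hv₁prim i₁
    · rw [Fin.append_right]; exact hv₂prim i₂

end decomp

section main
variable {R : Type*} [Ring R]

theorem dccp_of_endoartinian (hR : IsEndoartinian Rᵐᵒᵖ R) : DCCP R := by
  intro a ha
  let f : ℕ → R →ₗ[Rᵐᵒᵖ] R := fun n =>
    { toFun := fun x => a n * x
      map_add' := fun x y => mul_add _ x y
      map_smul' := fun r x => by
        simp only [RingHom.id_apply]
        show a n * (r • x) = r • (a n * x)
        rw [MulOpposite.smul_eq_mul_unop, MulOpposite.smul_eq_mul_unop, mul_assoc]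
    }
  have hr : ∀ n, LinearMap.range (f (n + 1)) ≤ LinearMap.range (f n) := by
    intro n y hy
    obtain ⟨x, hx⟩ := hy
    obtain ⟨r, hrr⟩ := ha n
    refine ⟨r * x, ?_⟩
    show a n * (r * x) = y
    rw [← mul_assoc, ← hrr]
    exact hx
  obtain ⟨n, hn⟩ := hR f hr
  refine ⟨n, fun k hk => ?_⟩
  have hm : a n ∈ LinearMap.range (f n) := ⟨1, mul_one _⟩
  rw [← hn k hk] at hm
  obtain ⟨s, hs⟩ := hm
  exact ⟨s, hs.symm⟩

theorem local_idem {L : Type*} [Ring L] [IsLocalRing L] (x : L) (hx : x * x = x) :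
    x = 0 ∨ x = 1 := by
  rcases IsLocalRing.isUnit_or_isUnit_of_add_one (a := x) (b := 1 - x) (by abel) with h | h
  · right
    obtain ⟨u, hu⟩ := h
    have h1 : (↑u⁻¹ : L) * (x * x) = ↑u⁻¹ * x := by rw [hx]
    rwa [← hu, ← mul_assoc, Units.inv_mul, one_mul, hu] at h1
  · left
    have hy : ((1 : L) - x) * (1 - x) = 1 - x := by
      rw [sub_mul, one_mul, mul_sub, mul_one, hx]
      abel
    obtain ⟨u, hu⟩ := h
    have h1 : (↑u⁻¹ : L) * (((1 : L) - x) * (1 - x)) = ↑u⁻¹ * (1 - x) := by rw [hy]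
    rw [← hu, ← mul_assoc, Units.inv_mul, one_mul, hu] at h1
    exact sub_eq_self.mp h1

end main

theorem idempotents_central_iff_product_of_local_rings' (R : Type) [Ring R]
    (hR : IsEndoartinian Rᵐᵒᵖ R) :
    (∀ e : R, e * e = e → ∀ r : R, e * r = r * e) ↔
      ∃ (n : ℕ) (S : Fin n → Type) (inst : (i : Fin n) → Ring (S i)),
        (∀ i, letI := inst i; IsLocalRing (S i)) ∧
        (letI := inst; Nonempty (R ≃+* ((i : Fin n) → S i))) := by
  have hd : DCCP R := dccp_of_endoartinian hR
  constructor
  · intro hid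
    obtain ⟨n, v, hidem, hne, _, horth, hsum, hprim⟩ := decomp hid hd 1 (one_mul 1)
    have hc : ∀ i, ∀ r : R, v i * r = r * v i := fun i => hid (v i) (hidem i)
    refine ⟨n, fun i => (idemCon (v i) (hc i)).Quotient, fun i => inferInstance, ?_, ?_⟩
    · intro i
      haveI := idemCon_nontrivial (v i) (hidem i) (hc i) (hne i)
      exact isLocalRing_of_dccp (idemCon_dccp (v i) (hidem i) (hc i) hd)
        (idemCon_idem (v i) (hidem i) (hc i) (hprim i))
    · set φ : R →+* ((i : Fin n) → (idemCon (v i) (hc i)).Quotient) :=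
        Pi.ringHom (fun i => RingCon.mk' (idemCon (v i) (hc i))) with hφ
      have hinj : Function.Injective φ := by
        intro x y hxy
        have h1 : ∀ i, v i * x = v i * y := by
          intro i
          exact (idemCon_eq (v i) (hc i)).1 (congrFun hxy i)
        calc x = 1 * x := (one_mul x).symm
        _ = (∑ i, v i) * x := by rw [hsum]
        _ = ∑ i, v i * x := by rw [Finset.sum_mul]
        _ = ∑ i, v i * y := Finset.sum_congr rfl (fun i _ => h1 i)
        _ = (∑ i, v i) * y := by rw [Finset.sum_mul]
        _ = y := by rw [hsum, one_mul]
      have hsurj : Function.Surjective φ := by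
        intro q
        choose a ha using fun i => idemCon_surj (v i) (hc i) (q i)
        refine ⟨∑ i, v i * a i, ?_⟩
        funext i
        show ((∑ j, v j * a j : R) : (idemCon (v i) (hc i)).Quotient) = q i
        rw [← ha i, idemCon_eq, Finset.mul_sum]
        rw [Finset.sum_eq_single i]
        · rw [← mul_assoc, hidem i]
        · intro j _ hji
          rw [← mul_assoc, horth i j (Ne.symm hji), zero_mul]
        · intro h
          exact absurd (Finset.mem_univ i) h
      exact ⟨RingEquiv.ofBijective φ ⟨hinj, hsurj⟩⟩
  · rintro ⟨n, S, inst, hloc, ⟨g⟩⟩ e he r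
    have hcomp : ∀ i, (g e i) * (g e i) = g e i := by
      intro i
      have h2 : g (e * e) = g e := by rw [he]
      rw [map_mul] at h2
      exact congrFun h2 i
    have h01 : ∀ i, g e i = 0 ∨ g e i = 1 := by
      intro i
      exact local_idem (L := S i) _ (hcomp i)
    apply g.injective
    rw [map_mul, map_mul]
    funext i
    show (g e i) * (g r i) = (g r i) * (g e i)
    rcases h01 i with h | h
    · rw [h, zero_mul, mul_zero]
    · rw [h, one_mul, mul_one]

/-- In a right endoartinian ring, every idempotent is central iff the ring is isomorphic
to a finite product of local rings. -/
theorem idempotents_central_iff_product_of_local_rings (R : Type) [Ring R]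
    (hR : IsEndoartinian Rᵐᵒᵖ R) :
    (∀ e : R, e * e = e → ∀ r : R, e * r = r * e) ↔
      ∃ (n : ℕ) (S : Fin n → Type) (inst : (i : Fin n) → Ring (S i)),
        (∀ i, letI := inst i; IsLocalRing (S i)) ∧
        (letI := inst; Nonempty (R ≃+* ((i : Fin n) → S i))) := by
  exact idempotents_central_iff_product_of_local_rings' R hR
end
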